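/- The Bayes error of the temperature-τ Gaussian model is monotonically nondecreasing in τ: for 0 < τ ≤ τ′, E_Bayes(τ) ≤ E_Bayes(τ′), where E_Bayes(τ) = 1 − Σ_k π_k ∫ ∏_{j≠k} 1{ãⱼₖᵀ z + b̃ⱼₖ/τ > 0} dN(z; 0, I) with b̃ⱼₖ = (μ_k−μ_j)ᵀΣ^{-1}(μ_k−μ_j) ≥ 0. -/

import Mathlib

open MeasureTheory ProbabilityTheory Matrix

/-- The Bayes error of the temperature-`τ` Gaussian model
`E(τ) = 1 − Σ_k π_k ∫ ∏_{j≠k} 1{ãⱼₖᵀ z + b̃ⱼₖ/τ > 0} dN(z; 0, I)`, with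
`ãⱼₖ = 2 Σ^{-1/2}(μ_k − μ_j)` and `b̃ⱼₖ = (μ_k − μ_j)ᵀ Σ⁻¹ (μ_k − μ_j) ≥ 0`, is
monotonically nondecreasing in `τ`. -/
theorem bayes_error_monotone_in_temperature
    (d K : ℕ) (μ : Fin K → (Fin d → ℝ)) (π : Fin K → ℝ)
    (hπ : ∀ k, 0 ≤ π k) (hπsum : ∑ k, π k = 1)
    (S B : Matrix (Fin d) (Fin d) ℝ) (hS : S.PosDef) (hB : B.PosDef)
    (hBsq : B * B = S⁻¹)
    (τ τ' : ℝ) (hτ : 0 < τ) (hττ' : τ ≤ τ') :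
    (fun t : ℝ => 1 - ∑ k, π k *
        ((Measure.pi fun _ : Fin d => gaussianReal 0 1)
          {z : Fin d → ℝ | ∀ j : Fin K, j ≠ k →
            ((2 : ℝ) • (B *ᵥ (μ k - μ j))) ⬝ᵥ z
              + ((μ k - μ j) ⬝ᵥ (S⁻¹ *ᵥ (μ k - μ j))) / t > 0}).toReal) τ
      ≤ (fun t : ℝ => 1 - ∑ k, π k *
        ((Measure.pi fun _ : Fin d => gaussianReal 0 1)
          {z : Fin d → ℝ | ∀ j : Fin K, j ≠ k →
            ((2 : ℝ) • (B *ᵥ (μ k - μ j))) ⬝ᵥ z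
              + ((μ k - μ j) ⬝ᵥ (S⁻¹ *ᵥ (μ k - μ j))) / t > 0}).toReal) τ' := by
  have hμ : IsProbabilityMeasure (Measure.pi fun _ : Fin d => gaussianReal 0 1) := by
    infer_instance
  refine sub_le_sub_left ?_ 1
  refine Finset.sum_le_sum fun k _ => ?_
  refine mul_le_mul_of_nonneg_left ?_ (hπ k)
  refine ENNReal.toReal_mono (measure_ne_top _ _) (measure_mono ?_)
  intro z hz j hj
  have hb : 0 ≤ (μ k - μ j) ⬝ᵥ (S⁻¹ *ᵥ (μ k - μ j)) :=
    hS.inv.posSemidef.re_dotProduct_nonneg _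
  have h1 := hz j hj
  have hdiv : ((μ k - μ j) ⬝ᵥ (S⁻¹ *ᵥ (μ k - μ j))) / τ'
      ≤ ((μ k - μ j) ⬝ᵥ (S⁻¹ *ᵥ (μ k - μ j))) / τ := by
    gcongr
  linarith
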